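/- arXiv:2301.00477 — 3 statements merged into one kernel-verified Lean document; each statement's English description precedes it below -/
import Mathlib

section
/- Let H ∈ ℝ^{n×n} be symmetric with uᵀHu ≥ ζ‖u‖² for all u in the null space of J ∈ ℝ^{m×n}, where ζ > 0. Suppose (d̄, ȳ) and (d, y) satisfy Hd̄ + Jᵀȳ = -ḡ, Jd̄ = -c and Hd + Jᵀy = -g, Jd = -c for gradient vectors ḡ, g ∈ ℝⁿ and a common c ∈ ℝᵐ. Then ‖d̄ - d‖ ≤ ζ⁻¹ ‖ḡ - g‖. -/
open scoped RealInnerProductSpace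
open ContinuousLinearMap

/-- If `H` is symmetric and satisfies `⟪u, H u⟫ ≥ ζ ‖u‖²` on `Null(J)` with `ζ > 0`, and
`(d̄, ȳ)`, `(d, y)` solve the KKT systems with gradients `ḡ`, `g` and common `c`, then
`‖d̄ - d‖ ≤ ζ⁻¹ ‖ḡ - g‖`. -/
theorem stmt3 {n m : ℕ}
    (H : EuclideanSpace ℝ (Fin n) →L[ℝ] EuclideanSpace ℝ (Fin n))
    (J : EuclideanSpace ℝ (Fin n) →L[ℝ] EuclideanSpace ℝ (Fin m))
    (hsymm : ∀ u v, ⟪H u, v⟫ = ⟪u, H v⟫)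
    (ζ : ℝ) (hζ : 0 < ζ)
    (hpos : ∀ u, J u = 0 → ζ * ‖u‖ ^ 2 ≤ ⟪u, H u⟫)
    (gbar g dbar d : EuclideanSpace ℝ (Fin n)) (c ybar y : EuclideanSpace ℝ (Fin m))
    (h1bar : H dbar + adjoint J ybar = -gbar) (h2bar : J dbar = -c)
    (h1 : H d + adjoint J y = -g) (h2 : J d = -c) :
    ‖dbar - d‖ ≤ ζ⁻¹ * ‖gbar - g‖ := by
  set u := dbar - d with hu
  have hJu : J u = 0 := by simp [hu, map_sub, h2bar, h2]
  have key : ζ * ‖u‖ ^ 2 ≤ ‖u‖ * ‖gbar - g‖ := by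
    have h := hpos u hJu
    have hHu : H u = -(gbar - g) - (adjoint J ybar - adjoint J y) := by
      have : H dbar - H d = (-gbar - adjoint J ybar) - (-g - adjoint J y) := by
        rw [eq_sub_of_add_eq h1bar, eq_sub_of_add_eq h1]
      simpa [hu, map_sub] using this.trans (by abel)
    have hadj : ⟪u, adjoint J ybar - adjoint J y⟫ = 0 := by
      simp [inner_sub_right, adjoint_inner_right, hJu]
    have : ⟪u, H u⟫ = -⟪u, gbar - g⟫ := by
      rw [hHu, inner_sub_right, hadj, inner_neg_right]; ring
    calc ζ * ‖u‖ ^ 2 ≤ ⟪u, H u⟫ := h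
      _ = -⟪u, gbar - g⟫ := this
      _ ≤ |⟪u, gbar - g⟫| := neg_le_abs _
      _ ≤ ‖u‖ * ‖gbar - g‖ := abs_real_inner_le_norm _ _
  rcases eq_or_ne u 0 with h0 | h0
  · simp [h0]; positivity
  · have hn : 0 < ‖u‖ := norm_pos_iff.mpr h0
    have hstep : ζ * ‖u‖ ≤ ‖gbar - g‖ := by nlinarith [key, hn]
    rw [inv_mul_eq_div, le_div_iff₀ hζ]
    linarith
end

section
/- Under the hypotheses of the previous setting, additionally assume ‖H‖ ≤ κ_H, ‖J‖ ≤ κ_J, and ‖(JJᵀ)⁻¹‖ ≤ κ_σ (with JJᵀ invertible). Then the dual solutions satisfy ‖ȳ - y‖ ≤ κ_σ κ_J (1 + κ_H ζ⁻¹) ‖ḡ - g‖. -/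
open scoped RealInnerProductSpace
open ContinuousLinearMap

/-- Under the KKT setting of the previous statement, together with `‖H‖ ≤ κ_H`, `‖J‖ ≤ κ_J`,
`JJᵀ` invertible with `‖(JJᵀ)⁻¹‖ ≤ κ_σ`, the dual solutions satisfy
`‖ȳ - y‖ ≤ κ_σ κ_J (1 + κ_H ζ⁻¹) ‖ḡ - g‖`. -/
theorem stmt4 {n m : ℕ}
    (H : EuclideanSpace ℝ (Fin n) →L[ℝ] EuclideanSpace ℝ (Fin n))
    (J : EuclideanSpace ℝ (Fin n) →L[ℝ] EuclideanSpace ℝ (Fin m))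
    (hsymm : ∀ u v, ⟪H u, v⟫ = ⟪u, H v⟫)
    (ζ : ℝ) (hζ : 0 < ζ)
    (hpos : ∀ u, J u = 0 → ζ * ‖u‖ ^ 2 ≤ ⟪u, H u⟫)
    (κH κJ κσ : ℝ) (hH : ‖H‖ ≤ κH) (hJ : ‖J‖ ≤ κJ)
    (K : EuclideanSpace ℝ (Fin m) →L[ℝ] EuclideanSpace ℝ (Fin m))
    (hK1 : K.comp (J.comp (adjoint J)) = ContinuousLinearMap.id ℝ _)
    (hK2 : (J.comp (adjoint J)).comp K = ContinuousLinearMap.id ℝ _)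
    (hKnorm : ‖K‖ ≤ κσ)
    (gbar g dbar d : EuclideanSpace ℝ (Fin n)) (c ybar y : EuclideanSpace ℝ (Fin m))
    (h1bar : H dbar + adjoint J ybar = -gbar) (h2bar : J dbar = -c)
    (h1 : H d + adjoint J y = -g) (h2 : J d = -c) :
    ‖ybar - y‖ ≤ κσ * κJ * (1 + κH * ζ⁻¹) * ‖gbar - g‖ := by
  set u := dbar - d with hu
  set δg := gbar - g with hδg
  set δy := ybar - y with hδy
  have hJu : J u = 0 := by
    simp [hu, map_sub, h2bar, h2]
  have heq : H u + adjoint J δy = -δg := by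
    simp only [hu, hδy, hδg, map_sub]
    calc H dbar - H d + (adjoint J ybar - adjoint J y)
        = (H dbar + adjoint J ybar) - (H d + adjoint J y) := by abel
      _ = -gbar - -g := by rw [h1bar, h1]
      _ = -(gbar - g) := by abel
  -- bound on ‖u‖
  have hud : ‖u‖ ≤ ζ⁻¹ * ‖δg‖ := by
    have h0 : ζ * ‖u‖ ^ 2 ≤ ⟪u, H u⟫ := hpos u hJu
    have hinner : ⟪u, H u⟫ = -⟪u, δg⟫ := by
      have h3 : ⟪u, H u + adjoint J δy⟫ = ⟪u, -δg⟫ := by rw [heq]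
      have h4 : ⟪u, adjoint J δy⟫ = 0 := by
        rw [ContinuousLinearMap.adjoint_inner_right, hJu, inner_zero_left]
      rw [inner_add_right, h4, inner_neg_right] at h3
      linarith
    have hcs : -⟪u, δg⟫ ≤ ‖u‖ * ‖δg‖ := by
      have := abs_real_inner_le_norm u δg
      have := neg_abs_le ⟪u, δg⟫
      linarith
    have h5 : ζ * ‖u‖ ^ 2 ≤ ‖u‖ * ‖δg‖ := by linarith
    rcases eq_or_lt_of_le (norm_nonneg u) with h | h
    · rw [← h]; positivity
    · have h6 : ζ * ‖u‖ ≤ ‖δg‖ := by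
        have := mul_le_mul_of_nonneg_right h5 (le_of_lt (inv_pos.mpr h))
        rw [pow_two] at this
        calc ζ * ‖u‖ = ζ * (‖u‖ * ‖u‖) * ‖u‖⁻¹ := by
              field_simp
          _ ≤ ‖u‖ * ‖δg‖ * ‖u‖⁻¹ := this
          _ = ‖δg‖ := by field_simp
      calc ‖u‖ = ζ⁻¹ * (ζ * ‖u‖) := by field_simp
        _ ≤ ζ⁻¹ * ‖δg‖ := by
          exact mul_le_mul_of_nonneg_left h6 (le_of_lt (inv_pos.mpr hζ))
  -- express δy
  have hδyeq : δy = -(K (J (δg + H u))) := by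
    have hJJ : J (adjoint J δy) = -(J (δg + H u)) := by
      have := congrArg J heq
      rw [map_add, map_neg] at this
      rw [map_add]
      have := congrArg Neg.neg this
      rw [neg_neg] at this
      rw [← this]; abel
    have hid : K (J (adjoint J δy)) = δy := by
      have := congrFun (congrArg DFunLike.coe hK1) δy
      simpa using this
    rw [← hid, hJJ, map_neg]
  -- nonnegativity
  have hκσ : 0 ≤ κσ := le_trans (norm_nonneg K) hKnorm
  have hκJ : 0 ≤ κJ := le_trans (norm_nonneg J) hJ
  have hκH : 0 ≤ κH := le_trans (norm_nonneg H) hH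
  -- assemble
  have hb : ‖δg + H u‖ ≤ (1 + κH * ζ⁻¹) * ‖δg‖ := by
    have h1' : ‖H u‖ ≤ κH * (ζ⁻¹ * ‖δg‖) := by
      calc ‖H u‖ ≤ ‖H‖ * ‖u‖ := H.le_opNorm u
        _ ≤ κH * (ζ⁻¹ * ‖δg‖) :=
          mul_le_mul hH hud (norm_nonneg u) hκH
    calc ‖δg + H u‖ ≤ ‖δg‖ + ‖H u‖ := norm_add_le _ _
      _ ≤ ‖δg‖ + κH * (ζ⁻¹ * ‖δg‖) := by linarith
      _ = (1 + κH * ζ⁻¹) * ‖δg‖ := by ring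
  have hbn : 0 ≤ (1 + κH * ζ⁻¹) * ‖δg‖ := by positivity
  calc ‖δy‖ = ‖K (J (δg + H u))‖ := by rw [hδyeq, norm_neg]
    _ ≤ ‖K‖ * ‖J (δg + H u)‖ := K.le_opNorm _
    _ ≤ κσ * (κJ * ((1 + κH * ζ⁻¹) * ‖δg‖)) := by
        apply mul_le_mul hKnorm _ (norm_nonneg _) hκσ
        calc ‖J (δg + H u)‖ ≤ ‖J‖ * ‖δg + H u‖ := J.le_opNorm _
          _ ≤ κJ * ((1 + κH * ζ⁻¹) * ‖δg‖) :=
            mul_le_mul hJ hb (norm_nonneg _) hκJ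
    _ = κσ * κJ * (1 + κH * ζ⁻¹) * ‖δg‖ := by ring
end

section
/- Let φ(x, τ) = τ f(x) + ‖c(x)‖₁ where ∇f is L-Lipschitz and each ∇c_i is γ_i-Lipschitz with Γ = Σγ_i. Suppose d ∈ ℝⁿ satisfies c(x) + ∇c(x)ᵀd = 0 (linearized feasibility), let g ∈ ℝⁿ, τ > 0, α ∈ (0,1], and Δl = -τ gᵀd + ‖c(x)‖₁. Then φ(x + αd, τ) - φ(x, τ) ≤ -α Δl + α τ (∇f(x) - g)ᵀd + (τL + Γ)/2 · α² ‖d‖². -/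
open scoped RealInnerProductSpace

lemma descent {E : Type*} [NormedAddCommGroup E] [InnerProductSpace ℝ E] [CompleteSpace E]
    (f : E → ℝ) (fg : E → E) (L : NNReal) (hg : ∀ x, HasGradientAt f (fg x) x)
    (hLip : LipschitzWith L fg) (x d : E) (α : ℝ) (hα : 0 ≤ α) :
    f (x + α • d) ≤ f x + α * ⟪fg x, d⟫ + (L : ℝ) / 2 * α ^ 2 * ‖d‖ ^ 2 := by
  set φ : ℝ → ℝ := fun t => f (x + t • d) with hφ
  have hderiv : ∀ t : ℝ, HasDerivAt φ ⟪fg (x + t • d), d⟫ t := by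
    intro t
    have h1 : HasDerivAt (fun t : ℝ => x + t • d) d t := by
      simpa using ((hasDerivAt_id t).smul_const d).const_add x
    have h2 := ((hg (x + t • d)).hasFDerivAt.comp_hasDerivAt t h1)
    simp [InnerProductSpace.toDual_apply_apply] at h2
    exact h2
  have hcont : Continuous fun t : ℝ => ⟪fg (x + t • d), d⟫ := by
    apply Continuous.inner _ continuous_const
    exact hLip.continuous.comp (by continuity)
  have hint : f (x + α • d) - f x = ∫ t in (0:ℝ)..α, ⟪fg (x + t • d), d⟫ := by
    have := intervalIntegral.integral_eq_sub_of_hasDerivAt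
      (f := φ) (f' := fun t => ⟪fg (x + t • d), d⟫)
      (fun t _ => hderiv t) (hcont.intervalIntegrable 0 α)
    simpa [hφ] using this.symm
  have hbound : ∀ t ∈ Set.Icc (0:ℝ) α,
      ⟪fg (x + t • d), d⟫ ≤ ⟪fg x, d⟫ + (L : ℝ) * t * ‖d‖ ^ 2 := by
    intro t ht
    have h1 : ⟪fg (x + t • d) - fg x, d⟫ ≤ ‖fg (x + t • d) - fg x‖ * ‖d‖ :=
      real_inner_le_norm _ _
    have h2 : ‖fg (x + t • d) - fg x‖ ≤ (L : ℝ) * (t * ‖d‖) := by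
      have := hLip.dist_le_mul (x + t • d) x
      simpa [dist_eq_norm, norm_smul, abs_of_nonneg ht.1] using this
    have h3 : ⟪fg (x + t • d), d⟫ - ⟪fg x, d⟫ ≤ (L : ℝ) * (t * ‖d‖) * ‖d‖ := by
      calc ⟪fg (x + t • d), d⟫ - ⟪fg x, d⟫ = ⟪fg (x + t • d) - fg x, d⟫ := by
            rw [inner_sub_left]
        _ ≤ ‖fg (x + t • d) - fg x‖ * ‖d‖ := h1
        _ ≤ (L : ℝ) * (t * ‖d‖) * ‖d‖ := by
            apply mul_le_mul_of_nonneg_right h2 (norm_nonneg d)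
    nlinarith [sq_nonneg ‖d‖]
  have hintle : (∫ t in (0:ℝ)..α, ⟪fg (x + t • d), d⟫) ≤
      ∫ t in (0:ℝ)..α, (⟪fg x, d⟫ + (L : ℝ) * t * ‖d‖ ^ 2) := by
    apply intervalIntegral.integral_mono_on hα (hcont.intervalIntegrable 0 α)
    · exact (Continuous.intervalIntegrable (by continuity) 0 α)
    · exact hbound
  have hcalc : (∫ t in (0:ℝ)..α, (⟪fg x, d⟫ + (L : ℝ) * t * ‖d‖ ^ 2)) =
      α * ⟪fg x, d⟫ + (L : ℝ) / 2 * α ^ 2 * ‖d‖ ^ 2 := by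
    have he : (fun t : ℝ => (L : ℝ) * t * ‖d‖ ^ 2) = fun t : ℝ => ((L : ℝ) * ‖d‖ ^ 2) * t := by
      funext t; ring
    rw [intervalIntegral.integral_add intervalIntegrable_const
      (by rw [he]; exact (continuous_const.mul continuous_id).intervalIntegrable 0 α), he,
      intervalIntegral.integral_const_mul, integral_id,
      intervalIntegral.integral_const]
    simp; ring
  linarith [hint ▸ hintle, hcalc ▸ hintle]

lemma descent_abs {E : Type*} [NormedAddCommGroup E] [InnerProductSpace ℝ E] [CompleteSpace E]
    (f : E → ℝ) (fg : E → E) (L : NNReal) (hg : ∀ x, HasGradientAt f (fg x) x)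
    (hLip : LipschitzWith L fg) (x d : E) (α : ℝ) (hα : 0 ≤ α) :
    |f (x + α • d) - f x - α * ⟪fg x, d⟫| ≤ (L : ℝ) / 2 * α ^ 2 * ‖d‖ ^ 2 := by
  have h1 := descent f fg L hg hLip x d α hα
  have hg' : ∀ y, HasGradientAt (fun z => -f z) (-(fg y)) y := by
    intro y
    have := (hg y).hasFDerivAt.neg
    have h2 : HasGradientAt (fun z => -f z) ((InnerProductSpace.toDual ℝ E).symm
        (-(InnerProductSpace.toDual ℝ E (fg y)))) y := this.hasGradientAt
    rwa [map_neg, LinearIsometryEquiv.symm_apply_apply] at h2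
  have hLip' : LipschitzWith L (fun y => -(fg y)) := by
    apply LipschitzWith.of_dist_le_mul
    intro a b
    rw [dist_neg_neg]; exact hLip.dist_le_mul a b
  have h2 := descent (fun z => -f z) (fun y => -(fg y)) L hg' hLip' x d α hα
  rw [inner_neg_left] at h2
  rw [abs_le]
  constructor <;> simp at h2 <;> nlinarith

/-- Merit function decrease: with `φ(x,τ) = τ f(x) + ‖c(x)‖₁`, `∇f` `L`-Lipschitz, each `∇c_i`
`γ_i`-Lipschitz, `Γ = ∑ γ_i`, and `d` satisfying linearized feasibility `c(x) + ∇c(x)ᵀd = 0`,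
for `α ∈ (0,1]` and `Δl = -τ gᵀd + ‖c(x)‖₁`:
`φ(x+αd,τ) - φ(x,τ) ≤ -α Δl + α τ (∇f(x)-g)ᵀd + (τL+Γ)/2 α² ‖d‖²`. -/
theorem stmt8 {n m : ℕ} (f : EuclideanSpace ℝ (Fin n) → ℝ)
    (fgrad : EuclideanSpace ℝ (Fin n) → EuclideanSpace ℝ (Fin n))
    (L : NNReal) (hfgrad : ∀ x, HasGradientAt f (fgrad x) x)
    (hfLip : LipschitzWith L fgrad)
    (c : EuclideanSpace ℝ (Fin n) → Fin m → ℝ)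
    (gc : Fin m → EuclideanSpace ℝ (Fin n) → EuclideanSpace ℝ (Fin n))
    (γ : Fin m → NNReal)
    (hcgrad : ∀ i x, HasGradientAt (fun z => c z i) (gc i x) x)
    (hcLip : ∀ i, LipschitzWith (γ i) (gc i))
    (x d g : EuclideanSpace ℝ (Fin n)) (τ α : ℝ) (hτ : 0 < τ)
    (hα : α ∈ Set.Ioc (0 : ℝ) 1)
    (hlin : ∀ i, c x i + ⟪gc i x, d⟫ = 0) :
    (τ * f (x + α • d) + ∑ i, |c (x + α • d) i|) - (τ * f x + ∑ i, |c x i|) ≤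
      -α * (-τ * ⟪g, d⟫ + ∑ i, |c x i|) + α * τ * ⟪fgrad x - g, d⟫ +
        (τ * (L : ℝ) + ∑ i, (γ i : ℝ)) / 2 * α ^ 2 * ‖d‖ ^ 2 := by
  obtain ⟨hα0, hα1⟩ := hα
  have hf := descent f fgrad L hfgrad hfLip x d α hα0.le
  have hc : ∀ i, |c (x + α • d) i| ≤ (1 - α) * |c x i| + (γ i : ℝ) / 2 * α ^ 2 * ‖d‖ ^ 2 := by
    intro i
    have h := descent_abs (fun z => c z i) (gc i) (γ i) (hcgrad i) (hcLip i) x d α hα0.le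
    have hlin' : ⟪gc i x, d⟫ = -c x i := by linarith [hlin i]
    rw [hlin'] at h
    have h1 : |c (x + α • d) i| ≤
        |c (x + α • d) i - c x i - α * (-c x i)| + |c x i + α * (-c x i)| := by
      have := abs_add_le (c (x + α • d) i - c x i - α * (-c x i)) (c x i + α * (-c x i))
      simpa [sub_add_add_cancel] using (le_of_eq (by ring_nf :
        |c (x + α • d) i| = |(c (x + α • d) i - c x i - α * (-c x i)) + (c x i + α * (-c x i))|)).trans this
    have h2 : |c x i + α * (-c x i)| = (1 - α) * |c x i| := by
      rw [show c x i + α * (-c x i) = (1 - α) * c x i by ring, abs_mul,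
        abs_of_nonneg (by linarith : (0:ℝ) ≤ 1 - α)]
    linarith
  have hsum : ∑ i, |c (x + α • d) i| ≤
      (1 - α) * ∑ i, |c x i| + (∑ i, (γ i : ℝ)) / 2 * α ^ 2 * ‖d‖ ^ 2 := by
    calc ∑ i, |c (x + α • d) i|
        ≤ ∑ i, ((1 - α) * |c x i| + (γ i : ℝ) / 2 * α ^ 2 * ‖d‖ ^ 2) :=
          Finset.sum_le_sum (fun i _ => hc i)
      _ = (1 - α) * ∑ i, |c x i| + (∑ i, (γ i : ℝ)) / 2 * α ^ 2 * ‖d‖ ^ 2 := by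
          rw [Finset.sum_add_distrib, ← Finset.mul_sum]
          congr 1
          have h3 : ∀ i : Fin m, (γ i : ℝ) / 2 * α ^ 2 * ‖d‖ ^ 2
              = (γ i : ℝ) * (α ^ 2 * ‖d‖ ^ 2 / 2) := fun i => by ring
          simp_rw [h3]
          rw [← Finset.sum_mul]
          ring
  have hτf := mul_le_mul_of_nonneg_left hf hτ.le
  rw [inner_sub_left]
  nlinarith [hτf, hsum]
end
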